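/- Let μ > 3/4 and suppose u : (0, δ) → ℂ^n is C¹ and satisfies the differential inequality t (d/dt)(t^{-2μ} |u(t)|²) ≤ 2 t^{-2μ} Re⟨u(t), F(t)⟩ for a continuous F : (0, δ) → ℂ^n. Then for 0 < t₀ ≤ t < δ: t^{-μ}|u(t)| ≤ t₀^{-μ}|u(t₀)| + ∫_{t₀}^{t} s^{-μ}|F(s)| s^{-1} ds. In particular, if F ≡ 0 and lim_{t→0} t^{-μ}|u(t)| = 0, then u ≡ 0 on (0, δ). -/

import Mathlib

open Set Filter

open Real MeasureTheory in
theorem aux18 (n : ℕ) (δ μ : ℝ)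
    (u F : ℝ → EuclideanSpace ℂ (Fin n))
    (hu : ContDiffOn ℝ 1 u (Ioo (0:ℝ) δ))
    (hF : ContinuousOn F (Ioo (0:ℝ) δ))
    (hineq : ∀ t ∈ Ioo (0:ℝ) δ,
      t * deriv (fun s : ℝ => s ^ (-(2*μ)) * ‖u s‖^2) t
        ≤ 2 * t ^ (-(2*μ)) * (inner ℂ (u t) (F t) : ℂ).re)
    (t₀ t : ℝ) (ht₀ : 0 < t₀) (ht₀t : t₀ ≤ t) (htδ : t < δ) :
    t ^ (-μ) * ‖u t‖ ≤ t₀ ^ (-μ) * ‖u t₀‖ + ∫ s in t₀..t, s ^ (-μ) * ‖F s‖ * s⁻¹ := by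
  set g : ℝ → ℝ := fun s : ℝ => s ^ (-(2*μ)) * ‖u s‖^2 with hg_def
  set f : ℝ → ℝ := fun s : ℝ => s ^ (-μ) * ‖u s‖ with hf_def
  set h : ℝ → ℝ := fun s : ℝ => s ^ (-μ) * ‖F s‖ * s⁻¹ with hh_def
  set fh : ℝ → ℝ := fun s => 2 * f s * h s with hfh_def
  have hsub : Icc t₀ t ⊆ Ioo 0 δ := fun s hs => ⟨lt_of_lt_of_le ht₀ hs.1, lt_of_le_of_lt hs.2 htδ⟩
  have hfg : ∀ s : ℝ, 0 < s → f s ^ 2 = g s := by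
    intro s hs
    simp only [hf_def, hg_def, mul_pow]
    congr 1
    rw [← Real.rpow_natCast (s ^ (-μ)) 2, ← Real.rpow_mul hs.le]
    norm_num
    ring_nf
  have hf0 : ∀ s : ℝ, 0 < s → 0 ≤ f s := fun s hs =>
    mul_nonneg (Real.rpow_nonneg hs.le _) (norm_nonneg _)
  have hh0 : ∀ s : ℝ, 0 < s → 0 ≤ h s := fun s hs =>
    mul_nonneg (mul_nonneg (Real.rpow_nonneg hs.le _) (norm_nonneg _)) (inv_nonneg.2 hs.le)
  have hg0 : ∀ s : ℝ, 0 < s → 0 ≤ g s := fun s hs =>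
    mul_nonneg (Real.rpow_nonneg hs.le _) (sq_nonneg _)
  have hrpow : ∀ c : ℝ, ContinuousOn (fun s : ℝ => s ^ c) (Ioo 0 δ) := fun c s hs =>
    (Real.continuousAt_rpow_const s c (Or.inl hs.1.ne')).continuousWithinAt
  have hf_cont : ContinuousOn f (Ioo 0 δ) := (hrpow _).mul hu.continuousOn.norm
  have hh_cont : ContinuousOn h (Ioo 0 δ) :=
    ((hrpow _).mul hF.norm).mul (continuousOn_id.inv₀ fun s hs => hs.1.ne')
  have hfh_cont : ContinuousOn fh (Ioo 0 δ) := (continuousOn_const.mul hf_cont).mul hh_cont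
  have hg_cd : ContDiffOn ℝ 1 g (Ioo 0 δ) := by
    have h1 : ContDiffOn ℝ 1 (fun s : ℝ => s ^ (-(2*μ))) (Ioo 0 δ) := fun s hs =>
      (Real.contDiffAt_rpow_const_of_ne hs.1.ne').contDiffWithinAt
    exact h1.mul (hu.norm_sq ℂ)
  have hgd : ∀ s ∈ Ioo (0:ℝ) δ, DifferentiableAt ℝ g s := fun s hs =>
    (hg_cd.contDiffAt (isOpen_Ioo.mem_nhds hs)).differentiableAt one_ne_zero
  have hg'cont : ContinuousOn (deriv g) (Ioo 0 δ) :=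
    hg_cd.continuousOn_deriv_of_isOpen isOpen_Ioo le_rfl
  have hle : ∀ s ∈ Ioo (0:ℝ) δ, deriv g s ≤ fh s := by
    intro s hs
    have hs0 : (0:ℝ) < s := hs.1
    have hre : (inner ℂ (u s) (F s) : ℂ).re ≤ ‖u s‖ * ‖F s‖ :=
      le_trans (Complex.re_le_norm _) (by exact norm_inner_le_norm _ _)
    have hpos : (0:ℝ) < s ^ (-(2*μ)) := Real.rpow_pos_of_pos hs0 _
    have h2 : s * deriv g s ≤ 2 * s ^ (-(2*μ)) * (‖u s‖ * ‖F s‖) :=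
      (hineq s hs).trans (by nlinarith)
    have h3 : deriv g s ≤ 2 * s ^ (-(2*μ)) * (‖u s‖ * ‖F s‖) * s⁻¹ := by
      rw [← div_eq_mul_inv, le_div_iff₀ hs0]
      nlinarith
    refine h3.trans_eq ?_
    have hrw : s ^ (-(2*μ)) = s ^ (-μ) * s ^ (-μ) := by
      rw [← Real.rpow_add hs0]; ring_nf
    simp only [hfh_def, hf_def, hh_def, hrw]
    ring
  -- FTC comparison
  have hginc : ∀ s ∈ Icc t₀ t, g s ≤ g t₀ + ∫ x in t₀..s, fh x := by
    intro s hs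
    have hsub' : Icc t₀ s ⊆ Ioo 0 δ := (Icc_subset_Icc_right hs.2).trans hsub
    have huIcc : uIcc t₀ s = Icc t₀ s := uIcc_of_le hs.1
    have hcont1 : ContinuousOn (deriv g) (uIcc t₀ s) := by rw [huIcc]; exact hg'cont.mono hsub'
    have hint1 : IntervalIntegrable (deriv g) volume t₀ s := hcont1.intervalIntegrable
    have hcont2 : ContinuousOn fh (uIcc t₀ s) := by rw [huIcc]; exact hfh_cont.mono hsub'
    have hint2 : IntervalIntegrable fh volume t₀ s := hcont2.intervalIntegrable
    have hftc : ∫ x in t₀..s, deriv g x = g s - g t₀ :=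
      intervalIntegral.integral_deriv_eq_sub
        (fun x hx => hgd x (hsub' (by rwa [huIcc] at hx))) hint1
    have hmono : (∫ x in t₀..s, deriv g x) ≤ ∫ x in t₀..s, fh x :=
      intervalIntegral.integral_mono_on hs.1 hint1 hint2 (fun x hx => hle x (hsub' hx))
    linarith [hftc ▸ hmono]

  -- integrability/derivative facts on [t₀, t]
  have hintfh : ∀ s ∈ Icc t₀ t, IntervalIntegrable fh volume t₀ s := by
    intro s hs
    have hsub' : Icc t₀ s ⊆ Ioo 0 δ := (Icc_subset_Icc_right hs.2).trans hsub
    exact (hfh_cont.mono (by rw [uIcc_of_le hs.1]; exact hsub')).intervalIntegrable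
  have hinth : ∀ s ∈ Icc t₀ t, IntervalIntegrable h volume t₀ s := by
    intro s hs
    have hsub' : Icc t₀ s ⊆ Ioo 0 δ := (Icc_subset_Icc_right hs.2).trans hsub
    exact (hh_cont.mono (by rw [uIcc_of_le hs.1]; exact hsub')).intervalIntegrable
  have hGd : ∀ s ∈ Icc t₀ t, HasDerivAt (fun r => ∫ x in t₀..r, fh x) (fh s) s := by
    intro s hs
    exact intervalIntegral.integral_hasDerivAt_right (hintfh s hs)
      (hfh_cont.stronglyMeasurableAtFilter isOpen_Ioo s (hsub hs))
      (hfh_cont.continuousAt (isOpen_Ioo.mem_nhds (hsub hs)))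
  have hHd : ∀ s ∈ Icc t₀ t, HasDerivAt (fun r => ∫ x in t₀..r, h x) (h s) s := by
    intro s hs
    exact intervalIntegral.integral_hasDerivAt_right (hinth s hs)
      (hh_cont.stronglyMeasurableAtFilter isOpen_Ioo s (hsub hs))
      (hh_cont.continuousAt (isOpen_Ioo.mem_nhds (hsub hs)))
  -- the ε-step
  have main : ∀ ε : ℝ, 0 < ε →
      f t ≤ Real.sqrt (g t₀ + ε) + ∫ x in t₀..t, h x := by
    intro ε hε
    set c : ℝ := g t₀ + ε with hc_def
    set G : ℝ → ℝ := fun r => ∫ x in t₀..r, fh x with hG_def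
    have hcG : ∀ s ∈ Icc t₀ t, 0 < c + G s := by
      intro s hs
      have h1 := hginc s hs
      have h2 := hg0 s (hsub hs).1
      simp only [hG_def, hc_def]
      linarith
    have hfψ : ∀ s ∈ Icc t₀ t, f s ≤ Real.sqrt (c + G s) := by
      intro s hs
      rw [Real.le_sqrt (hf0 s (hsub hs).1) (hcG s hs).le]
      rw [hfg s (hsub hs).1]
      have := hginc s hs
      simp only [hG_def, hc_def]
      linarith
    set ψ : ℝ → ℝ := fun r => Real.sqrt (c + G r) with hψ_def
    have hψd : ∀ s ∈ Icc t₀ t,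
        HasDerivAt ψ (1 / (2 * Real.sqrt (c + G s)) * fh s) s := by
      intro s hs
      exact (Real.hasDerivAt_sqrt (hcG s hs).ne').comp s ((hGd s hs).const_add c)
    set B : ℝ → ℝ := fun r => Real.sqrt c + ∫ x in t₀..r, h x with hB_def
    have hBd : ∀ s ∈ Icc t₀ t, HasDerivAt B (h s) s := by
      intro s hs
      exact (hHd s hs).const_add (Real.sqrt c)
    have hψ'le : ∀ s ∈ Icc t₀ t, 1 / (2 * Real.sqrt (c + G s)) * fh s ≤ h s := by
      intro s hs
      have hsq : 0 < Real.sqrt (c + G s) := Real.sqrt_pos.2 (hcG s hs)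
      have h1 := hfψ s hs
      have h2 := hh0 s (hsub hs).1
      have h3 := hf0 s (hsub hs).1
      rw [div_mul_eq_mul_div, one_mul, div_le_iff₀ (by positivity)]
      simp only [hfh_def]
      nlinarith
    set D : ℝ → ℝ := fun r => B r - ψ r with hD_def
    have hmono : MonotoneOn D (Icc t₀ t) := by
      apply monotoneOn_of_deriv_nonneg (convex_Icc t₀ t)
      · intro s hs
        exact ((hBd s hs).sub (hψd s hs)).continuousAt.continuousWithinAt
      · rw [interior_Icc]
        intro s hs
        exact (((hBd s (Ioo_subset_Icc_self hs)).sub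
          (hψd s (Ioo_subset_Icc_self hs))).differentiableAt).differentiableWithinAt
      · rw [interior_Icc]
        intro s hs
        have hs' := Ioo_subset_Icc_self hs
        rw [show deriv D s = _ from ((hBd s hs').sub (hψd s hs')).deriv]
        have := hψ'le s hs'
        linarith
    have hDle : D t₀ ≤ D t := hmono (left_mem_Icc.2 ht₀t) (right_mem_Icc.2 ht₀t) ht₀t
    have hDt₀ : D t₀ = 0 := by
      simp [hD_def, hB_def, hψ_def, hG_def, intervalIntegral.integral_same]
    have hft : f t ≤ ψ t := hfψ t (right_mem_Icc.2 ht₀t)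
    have : ψ t ≤ B t := by simp only [hD_def] at hDle hDt₀; linarith
    calc f t ≤ B t := hft.trans this
      _ = Real.sqrt (g t₀ + ε) + ∫ x in t₀..t, h x := by simp [hB_def, hc_def]
  -- limit ε → 0⁺
  have hsq0 : Real.sqrt (g t₀) = f t₀ := by
    rw [← hfg t₀ ht₀, Real.sqrt_sq (hf0 t₀ ht₀)]
  have htend : Tendsto (fun ε : ℝ => Real.sqrt (g t₀ + ε) + ∫ x in t₀..t, h x)
      (nhdsWithin 0 (Ioi 0)) (nhds (f t₀ + ∫ x in t₀..t, h x)) := by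
    have hcont : Continuous (fun ε : ℝ => Real.sqrt (g t₀ + ε) + ∫ x in t₀..t, h x) :=
      (Real.continuous_sqrt.comp (continuous_const.add continuous_id)).add continuous_const
    have : Tendsto (fun ε : ℝ => Real.sqrt (g t₀ + ε) + ∫ x in t₀..t, h x)
        (nhdsWithin 0 (Ioi 0)) (nhds (Real.sqrt (g t₀ + 0) + ∫ x in t₀..t, h x)) :=
      (hcont.tendsto 0).mono_left nhdsWithin_le_nhds
    simpa [hsq0] using this
  have := ge_of_tendsto htend (eventually_nhdsWithin_of_forall fun ε hε => main ε hε)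
  simpa [hf_def, hh_def] using this


/-- Model Grönwall-type energy estimate for the singular initial value problem: if
`u : (0, δ) → ℂⁿ` is `C¹` and satisfies the differential inequality
`t (d/dt)(t^{-2μ} ‖u(t)‖²) ≤ 2 t^{-2μ} Re⟨u(t), F(t)⟩` with `μ > 3/4` and `F`
continuous, then `t^{-μ}‖u(t)‖ ≤ t₀^{-μ}‖u(t₀)‖ + ∫_{t₀}^{t} s^{-μ}‖F(s)‖ s⁻¹ ds` for
`0 < t₀ ≤ t < δ`; in particular, if `F ≡ 0` and `t^{-μ}‖u(t)‖ → 0` as `t → 0⁺`, then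
`u ≡ 0` on `(0, δ)`. -/
theorem stmt_18 (n : ℕ) (δ μ : ℝ) (hδ : 0 < δ) (hμ : 3/4 < μ)
    (u F : ℝ → EuclideanSpace ℂ (Fin n))
    (hu : ContDiffOn ℝ 1 u (Ioo (0:ℝ) δ))
    (hF : ContinuousOn F (Ioo (0:ℝ) δ))
    (hineq : ∀ t ∈ Ioo (0:ℝ) δ,
      t * deriv (fun s : ℝ => s ^ (-(2*μ)) * ‖u s‖^2) t
        ≤ 2 * t ^ (-(2*μ)) * (inner ℂ (u t) (F t) : ℂ).re) :
    (∀ t₀ t : ℝ, 0 < t₀ → t₀ ≤ t → t < δ →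
      t ^ (-μ) * ‖u t‖ ≤ t₀ ^ (-μ) * ‖u t₀‖ + ∫ s in t₀..t, s ^ (-μ) * ‖F s‖ * s⁻¹)
    ∧ ((∀ t ∈ Ioo (0:ℝ) δ, F t = 0) →
        Tendsto (fun t : ℝ => t ^ (-μ) * ‖u t‖) (nhdsWithin 0 (Ioi 0)) (nhds 0) →
        ∀ t ∈ Ioo (0:ℝ) δ, u t = 0) := by
  constructor
  · intro t₀ t ht₀ ht₀t htδ
    exact aux18 n δ μ u F hu hF hineq t₀ t ht₀ ht₀t htδ
  · intro hF0 htend t ht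
    have hpos : (0:ℝ) < t ^ (-μ) := Real.rpow_pos_of_pos ht.1 _
    have key : t ^ (-μ) * ‖u t‖ ≤ 0 := by
      apply ge_of_tendsto htend
      filter_upwards [Ioc_mem_nhdsGT_of_mem (Set.mem_Ico.2 ⟨le_refl (0:ℝ), ht.1⟩)]
      intro t₀ ht₀'
      have h1 := aux18 n δ μ u F hu hF hineq t₀ t ht₀'.1 ht₀'.2 ht.2
      have h2 : (∫ s in t₀..t, s ^ (-μ) * ‖F s‖ * s⁻¹) = 0 := by
        rw [intervalIntegral.integral_congr (g := fun _ => (0:ℝ))]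
        · exact intervalIntegral.integral_zero
        · intro x hx
          rw [uIcc_of_le ht₀'.2] at hx
          have hx' : x ∈ Ioo (0:ℝ) δ := ⟨lt_of_lt_of_le ht₀'.1 hx.1, lt_of_le_of_lt hx.2 ht.2⟩
          simp [hF0 x hx']
      rw [h2, add_zero] at h1
      exact h1
    have h1 : t ^ (-μ) * ‖u t‖ = 0 :=
      le_antisymm key (mul_nonneg hpos.le (norm_nonneg _))
    have h2 : ‖u t‖ = 0 := by
      rcases mul_eq_zero.mp h1 with h | h
      · exact absurd h hpos.ne'
      · exact h
    exact norm_eq_zero.mp h2
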